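/- Case (VI)(ii): Let η, η' be characters of Γ with η|_Λ = η'|_Λ = ξ, and let c, c' be nonzero complex numbers such that L(η, c) and L(η', c') are case-VI representations (i.e. the products c₀·⋯·c_{r−1} and c'₀·⋯·c'_{r−1} both equal 1). Then L(η, c) and L(η', c') are isomorphic (via a linear isomorphism intertwining X, Y and every ρ(h)) if and only if there is an integer m with η = η'·χ₁^m and c = c'_m, where (c'_i) denotes the sequence associated to (η', c'). -/

import Mathlib

noncomputable section

/-- `(V, ρ, X, Y)` is a representation of the common part of the rank-2 algebra `A(ξ)`:
`ρ` is a group homomorphism (recorded via multiplicativity and unitality),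
`ρ(h)∘X = χ₁(h)·(X∘ρ(h))` and `ρ(h)∘Y = χ₂(h)·(Y∘ρ(h))` for all `h ∈ Γ`, and
`ρ(g) = ξ(g)·id` for all `g ∈ Λ`. -/
def IsRep {Γ : Type*} [CommGroup Γ] (χ₁ χ₂ : Γ →* ℂˣ) (Λ : Subgroup Γ) (ξ : ↥Λ →* ℂˣ)
    {V : Type*} [AddCommGroup V] [Module ℂ V]
    (ρ : Γ → Module.End ℂ V) (X Y : Module.End ℂ V) : Prop :=
  (∀ a b : Γ, ρ (a * b) = ρ a * ρ b) ∧ ρ 1 = 1 ∧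
  (∀ h : Γ, ρ h * X = (χ₁ h : ℂ) • (X * ρ h)) ∧
  (∀ h : Γ, ρ h * Y = (χ₂ h : ℂ) • (Y * ρ h)) ∧
  ∀ g : Λ, ρ (g : Γ) = (ξ g : ℂ) • (1 : Module.End ℂ V)

/-- A subspace `W` is stable under `X`, `Y` and all `ρ(h)`. -/
def Stable2 {Γ : Type*} {V : Type*} [AddCommGroup V] [Module ℂ V]
    (ρ : Γ → Module.End ℂ V) (X Y : Module.End ℂ V) (W : Submodule ℂ V) : Prop :=
  (∀ v ∈ W, X v ∈ W) ∧ (∀ v ∈ W, Y v ∈ W) ∧ ∀ h : Γ, ∀ v ∈ W, ρ h v ∈ W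

/-- Irreducibility: `V ≠ 0` and the only subspaces stable under `X`, `Y` and all `ρ(h)`
are `0` and `V`. -/
def Irred2 {Γ : Type*} {V : Type*} [AddCommGroup V] [Module ℂ V]
    (ρ : Γ → Module.End ℂ V) (X Y : Module.End ℂ V) : Prop :=
  (∃ v : V, v ≠ 0) ∧ ∀ W : Submodule ℂ V, Stable2 ρ X Y W → W = ⊥ ∨ W = ⊤

/-- The sequence `c_i` defined by `c₀ = c` and
`c_i = q·(c_{i−1} + ν − ν·q^{2(i−1)}·γ)` for `i ≥ 1`. -/
def cseq (q ν γ c : ℂ) : ℕ → ℂ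
  | 0 => c
  | i + 1 => q * (cseq q ν γ c i + ν - ν * q ^ (2 * i) * γ)

/-- `(V, ρ, X, Y)` is a case-VI representation: a representation with in addition
`X^r = id`, `Y^r = id` and `X∘Y = q⁻¹·(Y∘X) + ν·(ρ(g₁g₂) − id)`, where `q = χ₁(g₁)`. -/
def IsRepVI {Γ : Type*} [CommGroup Γ] (g₁ g₂ : Γ) (χ₁ χ₂ : Γ →* ℂˣ) (ν : ℂ)
    (Λ : Subgroup Γ) (ξ : ↥Λ →* ℂˣ) (r : ℕ)
    {V : Type*} [AddCommGroup V] [Module ℂ V]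
    (ρ : Γ → Module.End ℂ V) (X Y : Module.End ℂ V) : Prop :=
  IsRep χ₁ χ₂ Λ ξ ρ X Y ∧ X ^ r = 1 ∧ Y ^ r = 1 ∧
    X * Y = (((χ₁ g₁ : ℂˣ) : ℂ))⁻¹ • (Y * X) + ν • (ρ (g₁ * g₂) - 1)

/-- The action of `h ∈ Γ` on `L(η, c)`, with `ρ(h)·f_i = η(h)·χ₁(h)^i·f_i` on the basis
`(f_i)_{i ∈ ℤ/rℤ}` of `ℤ/rℤ → ℂ`. -/
def wRho (r : ℕ) {Γ : Type*} [CommGroup Γ] (χ₁ η : Γ →* ℂˣ) (h : Γ) :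
    Module.End ℂ (ZMod r → ℂ) where
  toFun v := fun i => (η h : ℂ) * (χ₁ h : ℂ) ^ i.val * v i
  map_add' v w := by funext i; simp [mul_add]
  map_smul' a v := by funext i; simp [smul_eq_mul]; ring

/-- The operator `X` on `L(η, c)`, with `X·f_i = f_{i+1}` (indices modulo `r`). -/
def wX (r : ℕ) : Module.End ℂ (ZMod r → ℂ) where
  toFun v := fun i => v (i - 1)
  map_add' _ _ := rfl
  map_smul' _ _ := rfl

/-- The operator `Y` on `L(η, c)`, with `Y·f_i = c_i·f_{i−1}` (indices modulo `r`,
the index of `c` being read off via the canonical representative in `{0, …, r−1}`). -/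
def wY (r : ℕ) (cs : ℕ → ℂ) : Module.End ℂ (ZMod r → ℂ) where
  toFun v := fun j => cs ((j + 1 : ZMod r).val) * v (j + 1)
  map_add' v w := by funext j; simp [mul_add]
  map_smul' a v := by funext j; simp [smul_eq_mul]; ring

lemma cseq_shift (q ν γ c : ℂ) (k n : ℕ) :
    cseq q ν γ c (n + k) = cseq q ν (q ^ (2 * k) * γ) (cseq q ν γ c k) n := by
  induction n with
  | zero => simp [cseq]
  | succ n ih =>
      rw [show n + 1 + k = (n + k) + 1 from by ring]
      show q * (cseq q ν γ c (n + k) + ν - ν * q ^ (2 * (n + k)) * γ) = _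
      rw [ih]
      show _ = q * (cseq q ν (q ^ (2*k) * γ) (cseq q ν γ c k) n + ν
        - ν * q ^ (2 * n) * (q ^ (2 * k) * γ))
      rw [show 2 * (n + k) = 2 * n + 2 * k from by ring, pow_add]
      ring

lemma cseq_closed (q ν γ c : ℂ) (n : ℕ) :
    cseq q ν γ c n = q ^ n * c + ν * (∑ j ∈ Finset.range n, q ^ (j + 1))
      - ν * γ * (∑ j ∈ Finset.range n, q ^ (n + j)) := by
  induction n with
  | zero => simp [cseq]
  | succ n ih =>
      show q * (cseq q ν γ c n + ν - ν * q ^ (2 * n) * γ) = _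
      rw [ih]
      rw [Finset.sum_range_succ' (fun j => q ^ (j + 1)) n,
        Finset.sum_range_succ (fun j => q ^ (n + 1 + j)) n]
      simp only [Finset.mul_sum]
      have e1 : q * ∑ i ∈ Finset.range n, ν * q ^ (i + 1)
          = ν * ∑ k ∈ Finset.range n, q ^ (k + 1 + 1) := by
        rw [Finset.mul_sum, Finset.mul_sum]
        exact Finset.sum_congr rfl fun i _ => by ring
      have e2 : q * ∑ i ∈ Finset.range n, ν * γ * q ^ (n + i)
          = ν * γ * ∑ x ∈ Finset.range n, q ^ (n + 1 + x) := by
        rw [Finset.mul_sum, Finset.mul_sum]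
        exact Finset.sum_congr rfl fun i _ => by ring
      have hp : q ^ (n + 1 + n) = q * q ^ (2 * n) := by
        rw [show n + 1 + n = 2 * n + 1 from by ring]; ring
      rw [hp]
      linear_combination e1 - e2

lemma cseq_r (q ν γ c : ℂ) (r : ℕ) (hr : 1 < r) (hq : IsPrimitiveRoot q r) :
    cseq q ν γ c r = c := by
  have h0 : ∑ j ∈ Finset.range r, q ^ j = 0 := hq.geom_sum_eq_zero hr
  have h1 : ∑ j ∈ Finset.range r, q ^ (j + 1) = 0 := by
    have : ∑ j ∈ Finset.range r, q ^ (j + 1) = q * ∑ j ∈ Finset.range r, q ^ j := by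
      rw [Finset.mul_sum]; exact Finset.sum_congr rfl fun i _ => by ring
    rw [this, h0, mul_zero]
  have h2 : ∑ j ∈ Finset.range r, q ^ (r + j) = 0 := by
    have : ∑ j ∈ Finset.range r, q ^ (r + j) = q ^ r * ∑ j ∈ Finset.range r, q ^ j := by
      rw [Finset.mul_sum]; exact Finset.sum_congr rfl fun i _ => by rw [pow_add]
    rw [this, h0, mul_zero]
  rw [cseq_closed, h1, h2, hq.pow_eq_one]
  ring

lemma cseq_period (q ν γ c : ℂ) (r : ℕ) (hr : 1 < r) (hq : IsPrimitiveRoot q r) (n : ℕ) :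
    cseq q ν γ c (n + r) = cseq q ν γ c n := by
  rw [cseq_shift, cseq_r q ν γ c r hr hq,
    show 2 * r = r * 2 from by ring, pow_mul, hq.pow_eq_one, one_pow, one_mul]

lemma cseq_mod (q ν γ c : ℂ) (r : ℕ) (hr : 1 < r) (hq : IsPrimitiveRoot q r)
    {a b : ℕ} (hab : a % r = b % r) :
    cseq q ν γ c a = cseq q ν γ c b := by
  have key : ∀ t s : ℕ, cseq q ν γ c (s + r * t) = cseq q ν γ c s := by
    intro t
    induction t with
    | zero => simp
    | succ t ih =>
        intro s
        rw [show s + r * (t + 1) = (s + r * t) + r from by ring,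
          cseq_period q ν γ c r hr hq, ih]
  calc cseq q ν γ c a = cseq q ν γ c (a % r) := by
        conv_lhs => rw [← Nat.mod_add_div a r]
        rw [key]
    _ = cseq q ν γ c b := by
        rw [hab]
        conv_rhs => rw [← Nat.mod_add_div b r]
        rw [key]

lemma pow_eq_pow_of_mod {z : ℂ} {r : ℕ} (hz : z ^ r = 1) {a b : ℕ} (h : a % r = b % r) :
    z ^ a = z ^ b := by
  have key : ∀ n : ℕ, z ^ n = z ^ (n % r) := by
    intro n
    conv_lhs => rw [← Nat.mod_add_div n r]
    rw [pow_add, pow_mul, hz, one_pow, mul_one]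
  rw [key a, key b, h]

/-- Shift by `a`: `(shiftLE r a v) i = v (i - a)`. -/
noncomputable def shiftLE (r : ℕ) (a : ZMod r) : (ZMod r → ℂ) ≃ₗ[ℂ] (ZMod r → ℂ) where
  toFun v := fun i => v (i - a)
  invFun v := fun i => v (i + a)
  map_add' _ _ := rfl
  map_smul' _ _ := rfl
  left_inv v := by funext i; simp
  right_inv v := by funext i; simp

/-- Case (VI)(ii): for characters `η, η'` of `Γ` restricting to `ξ` on `Λ` and nonzero
`c, c'` such that `L(η, c)` and `L(η', c')` are case-VI representations (i.e. the
products `c₀·⋯·c_{r−1}` and `c'₀·⋯·c'_{r−1}` both equal 1), `L(η, c)` and `L(η', c')`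
are isomorphic via a linear isomorphism intertwining `X`, `Y` and every `ρ(h)` if and
only if there is an integer `m ≥ 0` with `η = η'·χ₁^m` and `c = c'_m` (both conditions
being `r`-periodic in `m`, nonnegative `m` suffice). -/
theorem caseVI_iso_iff {Γ : Type*} [CommGroup Γ] [Fintype Γ] (g₁ g₂ : Γ)
    (χ₁ χ₂ : Γ →* ℂˣ) (hχ₂ : χ₂ = χ₁⁻¹) (h12 : χ₁ g₂ * χ₂ g₁ = 1)
    (r : ℕ) (hr : 1 < r) (hord : orderOf χ₁ = r)
    (hq : IsPrimitiveRoot ((χ₁ g₁ : ℂˣ) : ℂ) r)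
    (ν : ℂ) (hν : ν ≠ 0)
    (Λ : Subgroup Γ) (hΛ : ∀ g : Γ, g ∈ Λ ↔ (χ₁ g = 1 ∧ χ₂ g = 1)) (ξ : ↥Λ →* ℂˣ)
    (η η' : Γ →* ℂˣ) (hη : ∀ g : Λ, η (g : Γ) = ξ g) (hη' : ∀ g : Λ, η' (g : Γ) = ξ g)
    (c c' : ℂ) (hc : c ≠ 0) (hc' : c' ≠ 0)
    (hprod : ∏ i ∈ Finset.range r,
      cseq ((χ₁ g₁ : ℂˣ) : ℂ) ν ((η (g₁ * g₂) : ℂˣ) : ℂ) c i = 1)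
    (hprod' : ∏ i ∈ Finset.range r,
      cseq ((χ₁ g₁ : ℂˣ) : ℂ) ν ((η' (g₁ * g₂) : ℂˣ) : ℂ) c' i = 1) :
    (∃ φ : (ZMod r → ℂ) ≃ₗ[ℂ] (ZMod r → ℂ),
        (∀ v : ZMod r → ℂ, φ (wX r v) = wX r (φ v)) ∧
        (∀ v : ZMod r → ℂ,
          φ (wY r (cseq ((χ₁ g₁ : ℂˣ) : ℂ) ν ((η (g₁ * g₂) : ℂˣ) : ℂ) c) v) =
            wY r (cseq ((χ₁ g₁ : ℂˣ) : ℂ) ν ((η' (g₁ * g₂) : ℂˣ) : ℂ) c') (φ v)) ∧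
        ∀ (h : Γ) (v : ZMod r → ℂ), φ (wRho r χ₁ η h v) = wRho r χ₁ η' h (φ v)) ↔
      ∃ m : ℕ, η = η' * χ₁ ^ m ∧
        c = cseq ((χ₁ g₁ : ℂˣ) : ℂ) ν ((η' (g₁ * g₂) : ℂˣ) : ℂ) c' m := by
  haveI : NeZero r := ⟨by omega⟩
  set q : ℂ := ((χ₁ g₁ : ℂˣ) : ℂ) with hqdef
  set γ : ℂ := ((η (g₁ * g₂) : ℂˣ) : ℂ) with hγdef
  set γ' : ℂ := ((η' (g₁ * g₂) : ℂˣ) : ℂ) with hγ'def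
  have hχr : ∀ h : Γ, ((χ₁ h : ℂˣ) : ℂ) ^ r = 1 := by
    intro h
    have h1 : χ₁ ^ r = 1 := by rw [← hord]; exact pow_orderOf_eq_one χ₁
    have h2 : (χ₁ h) ^ r = 1 := by
      have := DFunLike.congr_fun h1 h
      simpa using this
    have h3 := congrArg Units.val h2
    rw [Units.val_pow_eq_pow_val] at h3
    simpa using h3
  constructor
  · rintro ⟨φ, hX, hY, hρ⟩
    set e0 : ZMod r → ℂ := Pi.single (0 : ZMod r) 1 with he0def
    have he0ne : e0 ≠ 0 := by
      intro h
      have := congrFun h 0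
      simp [he0def] at this
    have hwne : φ e0 ≠ 0 := fun h => he0ne (by simpa using (map_eq_zero_iff φ φ.injective).mp h)
    obtain ⟨j₀, hj₀⟩ : ∃ j, φ e0 j ≠ 0 := by
      by_contra hcon
      push_neg at hcon
      exact hwne (funext hcon)
    have hrho0 : ∀ h : Γ, wRho r χ₁ η h e0 = ((η h : ℂˣ) : ℂ) • e0 := by
      intro h
      funext i
      show (η h : ℂ) * (χ₁ h : ℂ) ^ i.val * e0 i = ((η h : ℂ) • e0) i
      by_cases hi : i = 0
      · subst hi; simp [he0def, ZMod.val_zero]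
      · simp [he0def, Pi.single_eq_of_ne hi]
    have key : ∀ h : Γ, (η h : ℂ) = (η' h : ℂ) * (χ₁ h : ℂ) ^ j₀.val := by
      intro h
      have h2 := hρ h e0
      rw [hrho0 h, map_smul] at h2
      have h3 := congrFun h2 j₀
      have h4 : (η h : ℂ) * φ e0 j₀ = (η' h : ℂ) * (χ₁ h : ℂ) ^ j₀.val * φ e0 j₀ := by
        simpa [wRho, smul_eq_mul] using h3
      exact mul_right_cancel₀ hj₀ h4
    refine ⟨j₀.val, ?_, ?_⟩
    · ext h
      rw [key h]
      simp
    · set em : ZMod r → ℂ := Pi.single (-1 : ZMod r) 1 with hemdef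
      have hXem : wX r em = e0 := by
        funext i
        show em (i - 1) = e0 i
        by_cases hi : i = 0
        · subst hi
          simp [hemdef, he0def, zero_sub]
        · have hne : i - 1 ≠ -1 := fun h => hi (by
            have := congrArg (· + 1) h; simpa using this)
          simp [hemdef, he0def, Pi.single_eq_of_ne hne, Pi.single_eq_of_ne hi]
      have hphiem : ∀ i, φ e0 i = φ em (i - 1) := by
        intro i
        have h2 := hX em
        rw [hXem] at h2
        exact congrFun h2 i
      have hYe0 : wY r (cseq q ν γ c) e0 = c • em := by
        funext j
        show cseq q ν γ c ((j + 1 : ZMod r).val) * e0 (j + 1) = (c • em) j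
        by_cases hj : j = -1
        · subst hj
          have h1 : (-1 : ZMod r) + 1 = 0 := by ring
          rw [h1]
          simp [he0def, hemdef, ZMod.val_zero]
          rfl
        · have h2 : j + 1 ≠ 0 := fun h => hj (by
            have := congrArg (· - 1) h; simpa using this)
          simp [he0def, hemdef, Pi.single_eq_of_ne h2, Pi.single_eq_of_ne hj]
      have h3 := hY e0
      rw [hYe0, map_smul] at h3
      have h4 := congrFun h3 (j₀ - 1)
      have h5 : j₀ - 1 + 1 = j₀ := by ring
      have h6 : c * φ em (j₀ - 1) = cseq q ν γ' c' ((j₀ - 1 + 1 : ZMod r).val) * φ e0 (j₀ - 1 + 1) := by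
        simpa [wY, smul_eq_mul] using h4
      rw [h5, ← hphiem j₀] at h6
      exact mul_right_cancel₀ hj₀ h6
  · rintro ⟨m, hm, hcm⟩
    set a : ZMod r := (m : ZMod r) with hadef
    have hg2 : χ₁ g₂ = χ₁ g₁ := by
      rw [hχ₂] at h12
      simp only [MonoidHom.inv_apply] at h12
      exact inv_inv (χ₁ g₁) ▸ (mul_inv_eq_one.mp h12)
    have hηh : ∀ h : Γ, (η h : ℂ) = (η' h : ℂ) * (χ₁ h : ℂ) ^ m := by
      intro h
      rw [hm]
      simp
    have hγeq : γ = q ^ (2 * m) * γ' := by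
      have hx : χ₁ (g₁ * g₂) = χ₁ g₁ * χ₁ g₁ := by rw [map_mul, hg2]
      rw [hγdef, hγ'def, hηh (g₁ * g₂), hx]
      push_cast
      rw [show 2 * m = m + m from by ring, pow_add]
      ring
    have key : ∀ k : ZMod r, cseq q ν γ c (k.val) = cseq q ν γ' c' ((k + a).val) := by
      intro k
      have s1 : cseq q ν γ' c' (k.val + m)
          = cseq q ν (q ^ (2 * m) * γ') (cseq q ν γ' c' m) k.val := cseq_shift q ν γ' c' m k.val
      rw [← hγeq, ← hcm] at s1
      rw [← s1]
      apply cseq_mod q ν γ' c' r hr hq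
      have h1 : (k + a).val = (k.val + a.val) % r := ZMod.val_add k a
      have h2 : a.val = m % r := ZMod.val_natCast r m
      have h0 : (k + a).val % r = (k + a).val := Nat.mod_eq_of_lt (ZMod.val_lt _)
      rw [h0, h1, h2, Nat.add_mod_mod]
    refine ⟨shiftLE r a, ?_, ?_, ?_⟩
    · intro v
      funext i
      show v (i - a - 1) = v (i - 1 - a)
      congr 1
      ring
    · intro v
      funext j
      show cseq q ν γ c ((j - a + 1 : ZMod r).val) * v (j - a + 1)
        = cseq q ν γ' c' ((j + 1 : ZMod r).val) * v (j + 1 - a)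
      have harg : j - a + 1 = (j + 1) - a := by ring
      have hk := key (j + 1 - a)
      rw [show (j + 1 - a) + a = j + 1 from by ring] at hk
      rw [harg, hk]
    · intro h v
      funext i
      show (η h : ℂ) * (χ₁ h : ℂ) ^ (i - a).val * v (i - a)
        = (η' h : ℂ) * (χ₁ h : ℂ) ^ i.val * v (i - a)
      have hmod : (m + (i - a).val) % r = i.val % r := by
        have h1 : i.val = ((a : ZMod r).val + (i - a).val) % r := by
          conv_lhs => rw [show i = a + (i - a) from by ring]
          exact ZMod.val_add a (i - a)
        have h2 : (a : ZMod r).val = m % r := ZMod.val_natCast r m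
        have h0 : i.val % r = i.val := Nat.mod_eq_of_lt (ZMod.val_lt i)
        rw [h0, h1, h2, Nat.mod_add_mod]
      have hpow : (χ₁ h : ℂ) ^ (m + (i - a).val) = (χ₁ h : ℂ) ^ i.val :=
        pow_eq_pow_of_mod (hχr h) hmod
      have h7 : (η h : ℂ) * (χ₁ h : ℂ) ^ (i - a).val
          = (η' h : ℂ) * (χ₁ h : ℂ) ^ i.val := by
        rw [hηh h, mul_assoc, ← pow_add, hpow]
      linear_combination (v (i - a)) * h7
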